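/- For all real σ with 0 < σ < 1/2 and all real t ≥ 1/2, one has ((1-σ)² + t²)/(σ² + t²) < (1 + 1/((σ-1)σ + t²))^(1-2σ). -/

import Mathlib

open Real Set
set_option maxHeartbeats 1000000

private lemma key_log (u : ℝ) (hu0 : 0 < u) (hu1 : u < 1) (s : ℝ) (hs0 : 0 < s) (hs1 : s < 1) :
    Real.log (1 + s * u) - Real.log (1 - s * u) <
      s * (Real.log (1 + u) - Real.log (1 - u)) := by
  set g : ℝ → ℝ := fun y => Real.log (1 + y * u) - Real.log (1 - y * u) with hg
  have hpos1 : ∀ y ∈ Icc (0:ℝ) 1, 0 < 1 + y * u := by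
    intro y hy
    nlinarith [hy.1, hy.2]
  have hpos2 : ∀ y ∈ Icc (0:ℝ) 1, 0 < 1 - y * u := by
    intro y hy
    nlinarith [hy.1, hy.2]
  have hder : ∀ y ∈ Ioo (0:ℝ) 1,
      HasDerivAt g (u / (1 + y * u) + u / (1 - y * u)) y := by
    intro y hy
    have hy' : y ∈ Icc (0:ℝ) 1 := Ioo_subset_Icc_self hy
    have ha : HasDerivAt (fun z : ℝ => 1 + z * u) u y := by
      simpa using ((hasDerivAt_id y).mul_const u).const_add 1
    have hb : HasDerivAt (fun z : ℝ => 1 - z * u) (-u) y := by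
      simpa using ((hasDerivAt_id y).mul_const u).const_sub 1
    have h1 := ha.log (hpos1 y hy').ne'
    have h2 := hb.log (hpos2 y hy').ne'
    have := h1.sub h2
    exact this.congr_deriv (by ring)
  have hderiv_eq : ∀ y ∈ Ioo (0:ℝ) 1,
      deriv g y = u / (1 + y * u) + u / (1 - y * u) := fun y hy => (hder y hy).deriv
  have hconv : StrictConvexOn ℝ (Icc (0:ℝ) 1) g := by
    apply strictConvexOn_of_deriv2_pos (convex_Icc 0 1)
    · apply ContinuousOn.sub
      · exact (Continuous.continuousOn (by continuity)).log
          (fun y hy => (hpos1 y hy).ne')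
      · exact (Continuous.continuousOn (by continuity)).log
          (fun y hy => (hpos2 y hy).ne')
    · intro y hy
      rw [interior_Icc] at hy
      have hy' : y ∈ Icc (0:ℝ) 1 := Ioo_subset_Icc_self hy
      have e1 : 0 < 1 + y * u := hpos1 y hy'
      have e2 : 0 < 1 - y * u := hpos2 y hy'
      have hEq : deriv g =ᶠ[nhds y] (fun z => u / (1 + z * u) + u / (1 - z * u)) := by
        filter_upwards [isOpen_Ioo.mem_nhds hy] with z hz using hderiv_eq z hz
      have ha : HasDerivAt (fun z : ℝ => 1 + z * u) u y := by
        simpa using ((hasDerivAt_id y).mul_const u).const_add 1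
      have hb : HasDerivAt (fun z : ℝ => 1 - z * u) (-u) y := by
        simpa using ((hasDerivAt_id y).mul_const u).const_sub 1
      have h1 : HasDerivAt (fun z : ℝ => u / (1 + z * u))
          ((0 * (1 + y * u) - u * u) / (1 + y * u) ^ 2) y :=
        (hasDerivAt_const y u).div ha e1.ne'
      have h2 : HasDerivAt (fun z : ℝ => u / (1 - z * u))
          ((0 * (1 - y * u) - u * (-u)) / (1 - y * u) ^ 2) y :=
        (hasDerivAt_const y u).div hb e2.ne'
      have h3 := (h1.add h2).deriv
      have : deriv (deriv g) y = (0 * (1 + y * u) - u * u) / (1 + y * u) ^ 2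
          + (0 * (1 - y * u) - u * (-u)) / (1 - y * u) ^ 2 := by
        rw [hEq.deriv_eq]; exact h3
      rw [show deriv^[2] g y = deriv (deriv g) y from rfl, this]
      have hlt : (1 - y * u) ^ 2 < (1 + y * u) ^ 2 := by nlinarith [hy.1, hy.2]
      have := div_lt_div_of_pos_left (by positivity : (0:ℝ) < u * u)
        (by positivity : (0:ℝ) < (1 - y * u) ^ 2) hlt
      calc (0:ℝ) < u * u / (1 - y * u) ^ 2 - u * u / (1 + y * u) ^ 2 := by linarith
        _ = (0 * (1 + y * u) - u * u) / (1 + y * u) ^ 2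
          + (0 * (1 - y * u) - u * (-u)) / (1 - y * u) ^ 2 := by ring
  have h0 : g 0 = 0 := by simp [hg]
  have h0 : g 0 = 0 := by simp [hg]
  have hmem0 : (0:ℝ) ∈ Icc (0:ℝ) 1 := left_mem_Icc.mpr one_pos.le
  have hmem1 : (1:ℝ) ∈ Icc (0:ℝ) 1 := right_mem_Icc.mpr one_pos.le
  have ha' : (0:ℝ) < 1 - s := sub_pos.mpr hs1
  have hab : (1 - s) + s = 1 := by ring
  have chord : g ((1 - s) • (0:ℝ) + s • (1:ℝ)) < (1 - s) • g 0 + s • g 1 :=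
    hconv.2 hmem0 hmem1 zero_ne_one ha' hs0 hab
  rw [smul_eq_mul, smul_eq_mul, smul_eq_mul, mul_zero, mul_one, zero_add, h0, mul_zero,
    zero_add] at chord
  simpa [hg] using chord

theorem ratio_lt_rpow (σ t : ℝ) (hσ0 : 0 < σ) (hσ : σ < 1 / 2) (ht : 1 / 2 ≤ t) :
    ((1 - σ) ^ 2 + t ^ 2) / (σ ^ 2 + t ^ 2) <
      (1 + 1 / ((σ - 1) * σ + t ^ 2)) ^ (1 - 2 * σ) := by
  set x : ℝ := (σ - 1) * σ + t ^ 2 with hxdef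
  have hx : 0 < x := by nlinarith [sq_nonneg (σ - 1/2), sq_nonneg t]
  set u : ℝ := 1 / (2 * x + 1) with hudef
  set s : ℝ := 1 - 2 * σ with hsdef
  have h2x1 : (0:ℝ) < 2 * x + 1 := by linarith
  have hu0 : 0 < u := by positivity
  have hu1 : u < 1 := by rw [hudef, div_lt_one h2x1]; linarith
  have hs0 : 0 < s := by rw [hsdef]; linarith
  have hs1 : s < 1 := by rw [hsdef]; linarith
  have key := key_log u hu0 hu1 s hs0 hs1
  have hA : (0:ℝ) < σ ^ 2 + t ^ 2 := by positivity
  have hB : (0:ℝ) < (1 - σ) ^ 2 + t ^ 2 := by nlinarith [sq_nonneg (1 - σ)]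
  have p1 : (0:ℝ) < 1 + s * u := by nlinarith
  have p2 : (0:ℝ) < 1 - s * u := by nlinarith
  have p3 : (0:ℝ) < 1 + u := by linarith
  have p4 : (0:ℝ) < 1 - u := by linarith
  have hbase : (0:ℝ) < 1 + 1 / x := by positivity
  have hq1 : (1 + s * u) / (1 - s * u) = ((1 - σ) ^ 2 + t ^ 2) / (σ ^ 2 + t ^ 2) := by
    rw [div_eq_div_iff p2.ne' hA.ne']
    rw [hudef, hsdef]
    field_simp [h2x1.ne']
    rw [hxdef]
    ring
  have hq2 : (1 + u) / (1 - u) = 1 + 1 / x := by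
    rw [hudef]
    field_simp
    ring
  have L : Real.log (((1 - σ) ^ 2 + t ^ 2) / (σ ^ 2 + t ^ 2)) < s * Real.log (1 + 1 / x) := by
    rw [← hq1, ← hq2, Real.log_div p1.ne' p2.ne', Real.log_div p3.ne' p4.ne']
    exact key
  calc ((1 - σ) ^ 2 + t ^ 2) / (σ ^ 2 + t ^ 2)
      = Real.exp (Real.log (((1 - σ) ^ 2 + t ^ 2) / (σ ^ 2 + t ^ 2))) :=
        (Real.exp_log (div_pos hB hA)).symm
    _ < Real.exp (s * Real.log (1 + 1 / x)) := Real.exp_lt_exp.mpr L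
    _ = (1 + 1 / x) ^ s := by rw [Real.rpow_def_of_pos hbase, mul_comm]
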